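/- There are exactly n ways to factor the n-cycle σ = (0,1,…,n−1) as a product of two involutions of {0,1,…,n−1}. Explicitly, the factorizations are σ = I_k ∘ I_{k−1} for 1 ≤ k ≤ n, where I_k(x) is the remainder of k − x modulo n. -/
import Mathlib

lemma fin_cast_inj' {n : ℕ} {x y : Fin n} (h : ((x:ℕ):ℤ) = ((y:ℕ):ℤ)) : x = y :=
  Fin.ext (by exact_mod_cast h)

lemma mod_cancel₁ (n a b : ℤ) : (a - (b % n)) % n = (a - b) % n := by
  conv_rhs => rw [Int.sub_emod]
  rw [Int.sub_emod a (b % n), Int.emod_emod_of_dvd _ dvd_rfl]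

lemma mod_cancel₂ (n a b : ℤ) : ((a % n) - b) % n = (a - b) % n := by
  conv_rhs => rw [Int.sub_emod]
  rw [Int.sub_emod (a % n) b, Int.emod_emod_of_dvd _ dvd_rfl]

lemma mod_cancel₃ (n a b : ℤ) : ((a % n) + b) % n = (a + b) % n := by
  conv_rhs => rw [Int.add_emod]
  rw [Int.add_emod (a % n) b, Int.emod_emod_of_dvd _ dvd_rfl]

theorem stmt_0 (n : ℕ) (hn : 1 ≤ n) (σ : Equiv.Perm (Fin n))
    (hσ : ∀ x : Fin n, ((σ x : ℕ) : ℤ) = ((x : ℕ) + 1) % n)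
    (I : ℤ → Equiv.Perm (Fin n))
    (hI : ∀ (k : ℤ) (x : Fin n), ((I k x : ℕ) : ℤ) = (k - (x : ℕ)) % n) :
    (Finset.univ.filter fun p : Equiv.Perm (Fin n) × Equiv.Perm (Fin n) =>
        p.1 * p.1 = 1 ∧ p.2 * p.2 = 1 ∧ p.2 * p.1 = σ).card = n ∧
    ∀ p : Equiv.Perm (Fin n) × Equiv.Perm (Fin n),
      (p.1 * p.1 = 1 ∧ p.2 * p.2 = 1 ∧ p.2 * p.1 = σ) ↔
        ∃ k : ℤ, 1 ≤ k ∧ k ≤ n ∧ p = (I (k - 1), I k) := by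
  have hn' : (0:ℤ) < n := by exact_mod_cast hn
  have hxlt : ∀ x : Fin n, ((x:ℕ):ℤ) < n := fun x => by exact_mod_cast x.isLt
  have hx0 : ∀ x : Fin n, (0:ℤ) ≤ ((x:ℕ):ℤ) := fun x => Int.ofNat_nonneg _
  have hxmod : ∀ x : Fin n, ((x:ℕ):ℤ) % n = ((x:ℕ):ℤ) :=
    fun x => Int.emod_eq_of_lt (hx0 x) (hxlt x)
  set z : Fin n := ⟨0, hn⟩ with hz
  have hzv : ((z:ℕ):ℤ) = 0 := by simp [hz]
  -- involution property of I k
  have hinv : ∀ k : ℤ, I k * I k = 1 := by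
    intro k
    ext1 x
    apply fin_cast_inj'
    rw [Equiv.Perm.mul_apply, hI, hI, mod_cancel₁]
    simpa using hxmod x
  -- I k * I (k-1) = σ
  have hfac : ∀ k : ℤ, I k * I (k-1) = σ := by
    intro k
    ext1 x
    apply fin_cast_inj'
    rw [Equiv.Perm.mul_apply, hI, hI, mod_cancel₁, hσ]
    ring_nf
  -- the key characterization
  have key : ∀ p : Equiv.Perm (Fin n) × Equiv.Perm (Fin n),
      (p.1 * p.1 = 1 ∧ p.2 * p.2 = 1 ∧ p.2 * p.1 = σ) ↔
        ∃ k : ℤ, 1 ≤ k ∧ k ≤ n ∧ p = (I (k - 1), I k) := by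
    intro p
    constructor
    · rintro ⟨h1, h2, h3⟩
      set a : ℤ := ((p.1 z : ℕ) : ℤ) with ha
      refine ⟨a + 1, by have := hx0 (p.1 z); omega, by have := hxlt (p.1 z); omega, ?_⟩
      -- p.2 = σ * p.1
      have hp2 : p.2 = σ * p.1 := by
        rw [← h3, mul_assoc, h1, mul_one]
      -- p.1 = σ * p.1 * σ
      have h4 : ∀ x : Fin n, p.1 x = σ (p.1 (σ x)) := by
        intro x
        have hp1 : p.1 = p.2 * σ := by
          rw [← h3, ← mul_assoc, h2, one_mul]
        conv_lhs => rw [hp1, hp2]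
        simp [Equiv.Perm.mul_apply]
      -- downward relation
      have hb : ∀ x : Fin n, ((p.1 (σ x) : ℕ):ℤ) = (((p.1 x : ℕ):ℤ) - 1) % n := by
        intro x
        have h5 : ((p.1 x : ℕ):ℤ) = (((p.1 (σ x) : ℕ):ℤ) + 1) % n := by
          rw [h4 x]; exact hσ _
        calc ((p.1 (σ x) : ℕ):ℤ) = (((p.1 (σ x) : ℕ):ℤ) + 1 - 1) % n := by
              rw [add_sub_cancel_right]; exact (hxmod _).symm
          _ = ((((p.1 (σ x) : ℕ):ℤ) + 1) % n - 1) % n := (mod_cancel₂ _ _ _).symm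
          _ = (((p.1 x : ℕ):ℤ) - 1) % n := by rw [← h5]
      -- induction on the value
      have claim : ∀ m : ℕ, ∀ (hm : m < n), ((p.1 ⟨m, hm⟩ : ℕ):ℤ) = (a - m) % n := by
        intro m
        induction m with
        | zero => intro hm; simpa [← hz, hzv] using (hxmod (p.1 z)).symm
        | succ m ih =>
          intro hm
          have hm' : m < n := Nat.lt_of_succ_lt hm
          have hσm : σ ⟨m, hm'⟩ = ⟨m+1, hm⟩ := by
            apply fin_cast_inj'
            rw [hσ]
            have : ((m:ℤ) + 1) % n = (m:ℤ) + 1 :=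
              Int.emod_eq_of_lt (by positivity) (by exact_mod_cast hm)
            simp [this]
          have := hb ⟨m, hm'⟩
          rw [hσm, ih hm'] at this
          rw [this, mod_cancel₂]
          push_cast
          ring_nf
      have hp1v : ∀ x : Fin n, ((p.1 x : ℕ):ℤ) = (a - (x:ℕ)) % n := by
        intro x
        have := claim x.val x.isLt
        simpa using this
      have hfst : p.1 = I a := by
        ext1 x
        apply fin_cast_inj'
        rw [hp1v, hI]
      have hsnd : p.2 = I (a+1) := by
        ext1 x
        apply fin_cast_inj'
        rw [hp2, Equiv.Perm.mul_apply, hσ, hp1v, mod_cancel₃, hI]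
        ring_nf
      have : p = (p.1, p.2) := rfl
      rw [this, hfst, hsnd]
      norm_num
    · rintro ⟨k, hk1, hk2, hpk⟩
      rw [hpk]
      exact ⟨hinv _, hinv _, hfac k⟩
  refine ⟨?_, key⟩
  have him : (Finset.univ.filter fun p : Equiv.Perm (Fin n) × Equiv.Perm (Fin n) =>
        p.1 * p.1 = 1 ∧ p.2 * p.2 = 1 ∧ p.2 * p.1 = σ)
      = (Finset.Icc (1:ℤ) (n:ℤ)).image (fun k => (I (k-1), I k)) := by
    ext p
    simp only [Finset.mem_filter, Finset.mem_univ, true_and, Finset.mem_image,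
      Finset.mem_Icc, key]
    constructor
    · rintro ⟨k, h1, h2, hp⟩; exact ⟨k, ⟨h1, h2⟩, hp.symm⟩
    · rintro ⟨k, ⟨h1, h2⟩, hp⟩; exact ⟨k, h1, h2, hp.symm⟩
  rw [him, Finset.card_image_of_injOn, Int.card_Icc]
  · simp
  · intro k hk k' hk' h
    simp only [Finset.coe_Icc, Set.mem_Icc] at hk hk'
    have h2 : I k = I k' := congrArg Prod.snd h
    have := congrArg (fun f : Equiv.Perm (Fin n) => ((f z : ℕ):ℤ)) h2
    simp only [hI, hzv, sub_zero] at this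
    have hdvd : (n:ℤ) ∣ (k' - k) := Int.ModEq.dvd this
    obtain ⟨t, ht⟩ := hdvd
    have ht0 : t = 0 := by
      by_contra h0
      rcases lt_or_gt_of_ne h0 with h' | h'
      · have h'' : t ≤ -1 := by omega
        nlinarith
      · have h'' : t ≥ 1 := by omega
        nlinarith
    rw [ht0, mul_zero] at ht
    omega
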